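/- arXiv:1811.11056 — 4 statements merged into one kernel-verified Lean document; each statement's English description precedes it below -/
import Mathlib

section
/- Let m₁, m₂ be coprime positive integers with α₁/α₂ = m₁/m₂, and set T = 2π·m₁/α₁. Then ∫₀ᵀ √(κ₁(t)² + κ₂(t)² + κ₃(t)²)·‖x′(t)‖ dt ≥ 2√5·π, where κ₁, κ₂, κ₃ are the first three Frenet curvatures of x. -/
open Real intervalIntegral

/-- The curve `x(t) = (a₁ cos(α₁ t), a₁ sin(α₁ t), a₂ cos(α₂ t), a₂ sin(α₂ t))` in `ℝ⁴`. -/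
noncomputable def curveX (a₁ a₂ α₁ α₂ : ℝ) : ℝ → EuclideanSpace ℝ (Fin 4) :=
  fun t => (WithLp.equiv 2 (Fin 4 → ℝ)).symm
    ![a₁ * Real.cos (α₁ * t), a₁ * Real.sin (α₁ * t),
      a₂ * Real.cos (α₂ * t), a₂ * Real.sin (α₂ * t)]

/-- `D_j(t)`: the determinant of the `j × j` Gram matrix whose `(a,b)` entry is the inner
product of the `a`-th and `b`-th derivatives of `y` at `t` (`1 ≤ a, b ≤ j`); `D₀ = 1`. -/
noncomputable def gramDet {n : ℕ} (y : ℝ → EuclideanSpace ℝ (Fin n)) (j : ℕ) (t : ℝ) : ℝ :=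
  Matrix.det (Matrix.of fun a b : Fin j =>
    (inner ℝ (iteratedDeriv (a.val + 1) y t) (iteratedDeriv (b.val + 1) y t) : ℝ))

/-- The `j`-th Frenet curvature `κ_j(t) = √(D_{j+1} D_{j-1}) / (D_j ‖y′(t)‖)` (for `j ≥ 1`). -/
noncomputable def frenetCurvature {n : ℕ} (y : ℝ → EuclideanSpace ℝ (Fin n)) (j : ℕ) (t : ℝ) :
    ℝ :=
  Real.sqrt (gramDet y (j + 1) t * gramDet y (j - 1) t) / (gramDet y j t * ‖deriv y t‖)

/-- The Plücker coordinates `w(t)` of the exterior product of `x′(t)` and `x″(t)`. -/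
noncomputable def oscW (x : ℝ → EuclideanSpace ℝ (Fin 4)) (t : ℝ) : EuclideanSpace ℝ (Fin 6) :=
  (WithLp.equiv 2 (Fin 6 → ℝ)).symm
    ![deriv x t 0 * deriv (deriv x) t 1 - deriv x t 1 * deriv (deriv x) t 0,
      deriv x t 0 * deriv (deriv x) t 2 - deriv x t 2 * deriv (deriv x) t 0,
      deriv x t 0 * deriv (deriv x) t 3 - deriv x t 3 * deriv (deriv x) t 0,
      deriv x t 1 * deriv (deriv x) t 2 - deriv x t 2 * deriv (deriv x) t 1,
      deriv x t 1 * deriv (deriv x) t 3 - deriv x t 3 * deriv (deriv x) t 1,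
      deriv x t 2 * deriv (deriv x) t 3 - deriv x t 3 * deriv (deriv x) t 2]

/-- The osculating indicatrix `x̃(t) = w(t) / ‖w(t)‖`. -/
noncomputable def oscInd (x : ℝ → EuclideanSpace ℝ (Fin 4)) (t : ℝ) :
    EuclideanSpace ℝ (Fin 6) :=
  ‖oscW x t‖⁻¹ • oscW x t

noncomputable def E4 (v : Fin 4 → ℝ) : EuclideanSpace ℝ (Fin 4) := (WithLp.equiv 2 (Fin 4 → ℝ)).symm v

lemma hasDerivAt_E4 (f0 f1 f2 f3 : ℝ → ℝ) (d0 d1 d2 d3 : ℝ) (t : ℝ)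
    (h0 : HasDerivAt f0 d0 t) (h1 : HasDerivAt f1 d1 t)
    (h2 : HasDerivAt f2 d2 t) (h3 : HasDerivAt f3 d3 t) :
    HasDerivAt (fun s => E4 ![f0 s, f1 s, f2 s, f3 s]) (E4 ![d0, d1, d2, d3]) t := by
  have hv : ∀ s : ℝ, ![f0 s, f1 s, f2 s, f3 s] = (fun i => ![f0, f1, f2, f3] i s) := by
    intro s; funext i; fin_cases i <;> simp
  have h : HasDerivAt (fun s => (fun i => ![f0, f1, f2, f3] i s : Fin 4 → ℝ))
      (fun i => ![d0, d1, d2, d3] i) t := by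
    refine hasDerivAt_pi.2 fun i => ?_
    fin_cases i <;> simpa
  have hc := ((PiLp.continuousLinearEquiv 2 ℝ (fun _ : Fin 4 => ℝ)).symm.hasFDerivAt).comp_hasDerivAt t h
  have hfun : (⇑(PiLp.continuousLinearEquiv 2 ℝ fun _ : Fin 4 => ℝ).symm ∘ fun s i => ![f0, f1, f2, f3] i s)
      = fun s => E4 ![f0 s, f1 s, f2 s, f3 s] := by
    funext s
    simp only [Function.comp_apply, E4, hv s]
    rfl
  rw [hfun] at hc
  exact hc

lemma E4_ext (v w : Fin 4 → ℝ) (h : ∀ i, v i = w i) : E4 v = E4 w := congrArg _ (funext h)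

lemma hd_cos (a α t : ℝ) : HasDerivAt (fun s => a * Real.cos (α * s)) (-(a * α) * Real.sin (α * t)) t := by
  have := (((hasDerivAt_id t).const_mul α).cos).const_mul a
  simp only [id_eq] at this
  refine this.congr_deriv ?_
  ring

lemma hd_sin (a α t : ℝ) : HasDerivAt (fun s => a * Real.sin (α * s)) ((a * α) * Real.cos (α * t)) t := by
  have := (((hasDerivAt_id t).const_mul α).sin).const_mul a
  simp only [id_eq] at this
  refine this.congr_deriv ?_
  ring

noncomputable def X1 (a₁ a₂ α₁ α₂ t : ℝ) : EuclideanSpace ℝ (Fin 4) :=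
  E4 ![-(a₁ * α₁) * Real.sin (α₁ * t), a₁ * α₁ * Real.cos (α₁ * t),
       -(a₂ * α₂) * Real.sin (α₂ * t), a₂ * α₂ * Real.cos (α₂ * t)]

noncomputable def X2 (a₁ a₂ α₁ α₂ t : ℝ) : EuclideanSpace ℝ (Fin 4) :=
  E4 ![-(a₁ * α₁ ^ 2) * Real.cos (α₁ * t), -(a₁ * α₁ ^ 2) * Real.sin (α₁ * t),
       -(a₂ * α₂ ^ 2) * Real.cos (α₂ * t), -(a₂ * α₂ ^ 2) * Real.sin (α₂ * t)]

noncomputable def X3 (a₁ a₂ α₁ α₂ t : ℝ) : EuclideanSpace ℝ (Fin 4) :=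
  E4 ![a₁ * α₁ ^ 3 * Real.sin (α₁ * t), -(a₁ * α₁ ^ 3) * Real.cos (α₁ * t),
       a₂ * α₂ ^ 3 * Real.sin (α₂ * t), -(a₂ * α₂ ^ 3) * Real.cos (α₂ * t)]

noncomputable def X4 (a₁ a₂ α₁ α₂ t : ℝ) : EuclideanSpace ℝ (Fin 4) :=
  E4 ![a₁ * α₁ ^ 4 * Real.cos (α₁ * t), a₁ * α₁ ^ 4 * Real.sin (α₁ * t),
       a₂ * α₂ ^ 4 * Real.cos (α₂ * t), a₂ * α₂ ^ 4 * Real.sin (α₂ * t)]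

lemma hX1 (a₁ a₂ α₁ α₂ t : ℝ) : HasDerivAt (curveX a₁ a₂ α₁ α₂) (X1 a₁ a₂ α₁ α₂ t) t := by
  have h := hasDerivAt_E4 _ _ _ _ _ _ _ _ t (hd_cos a₁ α₁ t) (hd_sin a₁ α₁ t)
    (hd_cos a₂ α₂ t) (hd_sin a₂ α₂ t)
  have : X1 a₁ a₂ α₁ α₂ t = E4 ![-(a₁ * α₁) * Real.sin (α₁ * t), a₁ * α₁ * Real.cos (α₁ * t),
      -(a₂ * α₂) * Real.sin (α₂ * t), a₂ * α₂ * Real.cos (α₂ * t)] := rfl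
  rw [this]
  exact h

lemma hX2 (a₁ a₂ α₁ α₂ t : ℝ) : HasDerivAt (X1 a₁ a₂ α₁ α₂) (X2 a₁ a₂ α₁ α₂ t) t := by
  have h := hasDerivAt_E4 _ _ _ _ _ _ _ _ t (hd_sin (-(a₁ * α₁)) α₁ t) (hd_cos (a₁ * α₁) α₁ t)
    (hd_sin (-(a₂ * α₂)) α₂ t) (hd_cos (a₂ * α₂) α₂ t)
  have e : X2 a₁ a₂ α₁ α₂ t = E4 ![-(a₁ * α₁) * α₁ * Real.cos (α₁ * t), -(a₁ * α₁ * α₁) * Real.sin (α₁ * t),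
      -(a₂ * α₂) * α₂ * Real.cos (α₂ * t), -(a₂ * α₂ * α₂) * Real.sin (α₂ * t)] := by
    apply E4_ext; intro i; fin_cases i <;> (simp only [Matrix.cons_val_zero, Matrix.cons_val_one, Matrix.head_cons,
      Matrix.cons_val_two, Matrix.tail_cons, Matrix.cons_val_three]; ring)
  rw [e]
  exact h

lemma hX3 (a₁ a₂ α₁ α₂ t : ℝ) : HasDerivAt (X2 a₁ a₂ α₁ α₂) (X3 a₁ a₂ α₁ α₂ t) t := by
  have h := hasDerivAt_E4 _ _ _ _ _ _ _ _ t (hd_cos (-(a₁ * α₁ ^ 2)) α₁ t) (hd_sin (-(a₁ * α₁ ^ 2)) α₁ t)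
    (hd_cos (-(a₂ * α₂ ^ 2)) α₂ t) (hd_sin (-(a₂ * α₂ ^ 2)) α₂ t)
  have e : X3 a₁ a₂ α₁ α₂ t = E4 ![-(-(a₁ * α₁ ^ 2) * α₁) * Real.sin (α₁ * t), -(a₁ * α₁ ^ 2) * α₁ * Real.cos (α₁ * t),
      -(-(a₂ * α₂ ^ 2) * α₂) * Real.sin (α₂ * t), -(a₂ * α₂ ^ 2) * α₂ * Real.cos (α₂ * t)] := by
    apply E4_ext; intro i; fin_cases i <;> (simp only [Matrix.cons_val_zero, Matrix.cons_val_one, Matrix.head_cons,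
      Matrix.cons_val_two, Matrix.tail_cons, Matrix.cons_val_three]; ring)
  rw [e]
  exact h

lemma hX4 (a₁ a₂ α₁ α₂ t : ℝ) : HasDerivAt (X3 a₁ a₂ α₁ α₂) (X4 a₁ a₂ α₁ α₂ t) t := by
  have h := hasDerivAt_E4 _ _ _ _ _ _ _ _ t (hd_sin (a₁ * α₁ ^ 3) α₁ t) (hd_cos (-(a₁ * α₁ ^ 3)) α₁ t)
    (hd_sin (a₂ * α₂ ^ 3) α₂ t) (hd_cos (-(a₂ * α₂ ^ 3)) α₂ t)
  have e : X4 a₁ a₂ α₁ α₂ t = E4 ![a₁ * α₁ ^ 3 * α₁ * Real.cos (α₁ * t), -(-(a₁ * α₁ ^ 3) * α₁) * Real.sin (α₁ * t),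
      a₂ * α₂ ^ 3 * α₂ * Real.cos (α₂ * t), -(-(a₂ * α₂ ^ 3) * α₂) * Real.sin (α₂ * t)] := by
    apply E4_ext; intro i; fin_cases i <;> (simp only [Matrix.cons_val_zero, Matrix.cons_val_one, Matrix.head_cons,
      Matrix.cons_val_two, Matrix.tail_cons, Matrix.cons_val_three]; ring)
  rw [e]
  exact h

lemma derivCurveX (a₁ a₂ α₁ α₂ : ℝ) : deriv (curveX a₁ a₂ α₁ α₂) = X1 a₁ a₂ α₁ α₂ :=
  funext fun t => (hX1 a₁ a₂ α₁ α₂ t).deriv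

lemma iter1 (a₁ a₂ α₁ α₂ : ℝ) : iteratedDeriv 1 (curveX a₁ a₂ α₁ α₂) = X1 a₁ a₂ α₁ α₂ := by
  rw [iteratedDeriv_one]; exact derivCurveX a₁ a₂ α₁ α₂

lemma iter2 (a₁ a₂ α₁ α₂ : ℝ) : iteratedDeriv 2 (curveX a₁ a₂ α₁ α₂) = X2 a₁ a₂ α₁ α₂ := by
  rw [iteratedDeriv_succ, iter1]; exact funext fun t => (hX2 a₁ a₂ α₁ α₂ t).deriv

lemma iter3 (a₁ a₂ α₁ α₂ : ℝ) : iteratedDeriv 3 (curveX a₁ a₂ α₁ α₂) = X3 a₁ a₂ α₁ α₂ := by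
  rw [iteratedDeriv_succ, iter2]; exact funext fun t => (hX3 a₁ a₂ α₁ α₂ t).deriv

lemma iter4 (a₁ a₂ α₁ α₂ : ℝ) : iteratedDeriv 4 (curveX a₁ a₂ α₁ α₂) = X4 a₁ a₂ α₁ α₂ := by
  rw [iteratedDeriv_succ, iter3]; exact funext fun t => (hX4 a₁ a₂ α₁ α₂ t).deriv

lemma inner_E4 (v w : Fin 4 → ℝ) :
    (inner ℝ (E4 v) (E4 w) : ℝ) = v 0 * w 0 + v 1 * w 1 + v 2 * w 2 + v 3 * w 3 := by
  simp [E4, PiLp.inner_apply, Fin.sum_univ_four, RCLike.inner_apply]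
  ring

lemma norm_E4 (v : Fin 4 → ℝ) :
    ‖E4 v‖ = Real.sqrt (v 0 ^ 2 + v 1 ^ 2 + v 2 ^ 2 + v 3 ^ 2) := by
  rw [E4, EuclideanSpace.norm_eq]
  congr 1
  simp [Fin.sum_univ_four, Real.norm_eq_abs, sq_abs]

section InnerTable
variable (a₁ a₂ α₁ α₂ t : ℝ)

local notation "x" => curveX a₁ a₂ α₁ α₂
local notation "Y1" => X1 a₁ a₂ α₁ α₂ t
local notation "Y2" => X2 a₁ a₂ α₁ α₂ t
local notation "Y3" => X3 a₁ a₂ α₁ α₂ t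
local notation "Y4" => X4 a₁ a₂ α₁ α₂ t

lemma I11 : (inner ℝ Y1 Y1 : ℝ) = a₁^2*α₁^2 + a₂^2*α₂^2 := by
  simp only [X1, inner_E4, Matrix.cons_val_zero, Matrix.cons_val_one, Matrix.head_cons,
    Matrix.cons_val_two, Matrix.tail_cons, Matrix.cons_val_three]
  linear_combination a₁^2*α₁^2 * Real.sin_sq_add_cos_sq (α₁*t) + a₂^2*α₂^2 * Real.sin_sq_add_cos_sq (α₂*t)

lemma I12 : (inner ℝ Y1 Y2 : ℝ) = 0 := by
  simp only [X1, X2, inner_E4, Matrix.cons_val_zero, Matrix.cons_val_one, Matrix.head_cons,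
    Matrix.cons_val_two, Matrix.tail_cons, Matrix.cons_val_three]
  ring

lemma I13 : (inner ℝ Y1 Y3 : ℝ) = -(a₁^2*α₁^4 + a₂^2*α₂^4) := by
  simp only [X1, X3, inner_E4, Matrix.cons_val_zero, Matrix.cons_val_one, Matrix.head_cons,
    Matrix.cons_val_two, Matrix.tail_cons, Matrix.cons_val_three]
  linear_combination (-(a₁^2*α₁^4)) * Real.sin_sq_add_cos_sq (α₁*t) + (-(a₂^2*α₂^4)) * Real.sin_sq_add_cos_sq (α₂*t)

lemma I14 : (inner ℝ Y1 Y4 : ℝ) = 0 := by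
  simp only [X1, X4, inner_E4, Matrix.cons_val_zero, Matrix.cons_val_one, Matrix.head_cons,
    Matrix.cons_val_two, Matrix.tail_cons, Matrix.cons_val_three]
  ring

lemma I22 : (inner ℝ Y2 Y2 : ℝ) = a₁^2*α₁^4 + a₂^2*α₂^4 := by
  simp only [X2, inner_E4, Matrix.cons_val_zero, Matrix.cons_val_one, Matrix.head_cons,
    Matrix.cons_val_two, Matrix.tail_cons, Matrix.cons_val_three]
  linear_combination a₁^2*α₁^4 * Real.sin_sq_add_cos_sq (α₁*t) + a₂^2*α₂^4 * Real.sin_sq_add_cos_sq (α₂*t)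

lemma I23 : (inner ℝ Y2 Y3 : ℝ) = 0 := by
  simp only [X2, X3, inner_E4, Matrix.cons_val_zero, Matrix.cons_val_one, Matrix.head_cons,
    Matrix.cons_val_two, Matrix.tail_cons, Matrix.cons_val_three]
  ring

lemma I24 : (inner ℝ Y2 Y4 : ℝ) = -(a₁^2*α₁^6 + a₂^2*α₂^6) := by
  simp only [X2, X4, inner_E4, Matrix.cons_val_zero, Matrix.cons_val_one, Matrix.head_cons,
    Matrix.cons_val_two, Matrix.tail_cons, Matrix.cons_val_three]
  linear_combination (-(a₁^2*α₁^6)) * Real.sin_sq_add_cos_sq (α₁*t) + (-(a₂^2*α₂^6)) * Real.sin_sq_add_cos_sq (α₂*t)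

lemma I33 : (inner ℝ Y3 Y3 : ℝ) = a₁^2*α₁^6 + a₂^2*α₂^6 := by
  simp only [X3, inner_E4, Matrix.cons_val_zero, Matrix.cons_val_one, Matrix.head_cons,
    Matrix.cons_val_two, Matrix.tail_cons, Matrix.cons_val_three]
  linear_combination a₁^2*α₁^6 * Real.sin_sq_add_cos_sq (α₁*t) + a₂^2*α₂^6 * Real.sin_sq_add_cos_sq (α₂*t)

lemma I34 : (inner ℝ Y3 Y4 : ℝ) = 0 := by
  simp only [X3, X4, inner_E4, Matrix.cons_val_zero, Matrix.cons_val_one, Matrix.head_cons,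
    Matrix.cons_val_two, Matrix.tail_cons, Matrix.cons_val_three]
  ring

lemma I44 : (inner ℝ Y4 Y4 : ℝ) = a₁^2*α₁^8 + a₂^2*α₂^8 := by
  simp only [X4, inner_E4, Matrix.cons_val_zero, Matrix.cons_val_one, Matrix.head_cons,
    Matrix.cons_val_two, Matrix.tail_cons, Matrix.cons_val_three]
  linear_combination a₁^2*α₁^8 * Real.sin_sq_add_cos_sq (α₁*t) + a₂^2*α₂^8 * Real.sin_sq_add_cos_sq (α₂*t)

end InnerTable

section Gram
variable (a₁ a₂ α₁ α₂ t : ℝ)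

local notation "x" => curveX a₁ a₂ α₁ α₂

lemma J11 : (inner ℝ (iteratedDeriv 1 x t) (iteratedDeriv 1 x t) : ℝ) = a₁^2*α₁^2 + a₂^2*α₂^2 := by
  rw [iter1]; exact I11 a₁ a₂ α₁ α₂ t
lemma J12 : (inner ℝ (iteratedDeriv 1 x t) (iteratedDeriv 2 x t) : ℝ) = 0 := by
  rw [iter1, iter2]; exact I12 a₁ a₂ α₁ α₂ t
lemma J13 : (inner ℝ (iteratedDeriv 1 x t) (iteratedDeriv 3 x t) : ℝ) = -(a₁^2*α₁^4 + a₂^2*α₂^4) := by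
  rw [iter1, iter3]; exact I13 a₁ a₂ α₁ α₂ t
lemma J14 : (inner ℝ (iteratedDeriv 1 x t) (iteratedDeriv 4 x t) : ℝ) = 0 := by
  rw [iter1, iter4]; exact I14 a₁ a₂ α₁ α₂ t
lemma J22 : (inner ℝ (iteratedDeriv 2 x t) (iteratedDeriv 2 x t) : ℝ) = a₁^2*α₁^4 + a₂^2*α₂^4 := by
  rw [iter2]; exact I22 a₁ a₂ α₁ α₂ t
lemma J23 : (inner ℝ (iteratedDeriv 2 x t) (iteratedDeriv 3 x t) : ℝ) = 0 := by
  rw [iter2, iter3]; exact I23 a₁ a₂ α₁ α₂ t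
lemma J24 : (inner ℝ (iteratedDeriv 2 x t) (iteratedDeriv 4 x t) : ℝ) = -(a₁^2*α₁^6 + a₂^2*α₂^6) := by
  rw [iter2, iter4]; exact I24 a₁ a₂ α₁ α₂ t
lemma J33 : (inner ℝ (iteratedDeriv 3 x t) (iteratedDeriv 3 x t) : ℝ) = a₁^2*α₁^6 + a₂^2*α₂^6 := by
  rw [iter3]; exact I33 a₁ a₂ α₁ α₂ t
lemma J34 : (inner ℝ (iteratedDeriv 3 x t) (iteratedDeriv 4 x t) : ℝ) = 0 := by
  rw [iter3, iter4]; exact I34 a₁ a₂ α₁ α₂ t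
lemma J44 : (inner ℝ (iteratedDeriv 4 x t) (iteratedDeriv 4 x t) : ℝ) = a₁^2*α₁^8 + a₂^2*α₂^8 := by
  rw [iter4]; exact I44 a₁ a₂ α₁ α₂ t

lemma Jsymm (i j : ℕ) : (inner ℝ (iteratedDeriv i x t) (iteratedDeriv j x t) : ℝ)
    = (inner ℝ (iteratedDeriv j x t) (iteratedDeriv i x t) : ℝ) := real_inner_comm _ _

lemma gram0 : gramDet x 0 t = 1 := by
  simp [gramDet]

lemma gram1 : gramDet x 1 t = a₁^2*α₁^2 + a₂^2*α₂^2 := by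
  rw [gramDet, Matrix.det_fin_one, Matrix.of_apply]
  exact J11 a₁ a₂ α₁ α₂ t

lemma gram2 : gramDet x 2 t = (a₁^2*α₁^2 + a₂^2*α₂^2) * (a₁^2*α₁^4 + a₂^2*α₂^4) := by
  rw [gramDet, Matrix.det_fin_two]
  simp only [Matrix.of_apply]
  rw [show ((0 : Fin 2).val + 1) = 1 from rfl, show ((1 : Fin 2).val + 1) = 2 from rfl]
  rw [J11, J12, J22, Jsymm a₁ a₂ α₁ α₂ t 2 1, J12]
  ring

lemma gram3 : gramDet x 3 t = (a₁^2*α₁^4 + a₂^2*α₂^4) *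
    ((a₁^2*α₁^2 + a₂^2*α₂^2) * (a₁^2*α₁^6 + a₂^2*α₂^6) - (a₁^2*α₁^4 + a₂^2*α₂^4)^2) := by
  rw [gramDet, Matrix.det_fin_three]
  simp only [Matrix.of_apply]
  rw [show ((0 : Fin 3).val + 1) = 1 from rfl, show ((1 : Fin 3).val + 1) = 2 from rfl,
    show ((2 : Fin 3).val + 1) = 3 from rfl]
  rw [J11, J12, J13, J22, J23, J33, Jsymm a₁ a₂ α₁ α₂ t 2 1, Jsymm a₁ a₂ α₁ α₂ t 3 1,
    Jsymm a₁ a₂ α₁ α₂ t 3 2, J12, J13, J23]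
  ring

lemma gram4 : gramDet x 4 t =
    ((a₁^2*α₁^2 + a₂^2*α₂^2) * (a₁^2*α₁^6 + a₂^2*α₂^6) - (a₁^2*α₁^4 + a₂^2*α₂^4)^2) *
    ((a₁^2*α₁^4 + a₂^2*α₂^4) * (a₁^2*α₁^8 + a₂^2*α₂^8) - (a₁^2*α₁^6 + a₂^2*α₂^6)^2) := by
  have hM : (Matrix.of fun a b : Fin 4 =>
      (inner ℝ (iteratedDeriv (a.val + 1) x t) (iteratedDeriv (b.val + 1) x t) : ℝ)) =
      !![a₁^2*α₁^2 + a₂^2*α₂^2, 0, -(a₁^2*α₁^4 + a₂^2*α₂^4), 0;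
         0, a₁^2*α₁^4 + a₂^2*α₂^4, 0, -(a₁^2*α₁^6 + a₂^2*α₂^6);
         -(a₁^2*α₁^4 + a₂^2*α₂^4), 0, a₁^2*α₁^6 + a₂^2*α₂^6, 0;
         0, -(a₁^2*α₁^6 + a₂^2*α₂^6), 0, a₁^2*α₁^8 + a₂^2*α₂^8] := by
    ext a b
    fin_cases a <;> fin_cases b <;>
      simp only [Matrix.of_apply, Matrix.cons_val', Matrix.cons_val_zero, Matrix.cons_val_one,
        Matrix.head_cons, Matrix.empty_val', Matrix.cons_val_fin_one, Matrix.head_fin_const,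
        Matrix.cons_val_two, Matrix.tail_cons, Matrix.cons_val_three] <;>
      first
        | exact J11 a₁ a₂ α₁ α₂ t | exact J12 a₁ a₂ α₁ α₂ t | exact J13 a₁ a₂ α₁ α₂ t
        | exact J14 a₁ a₂ α₁ α₂ t | exact J22 a₁ a₂ α₁ α₂ t | exact J23 a₁ a₂ α₁ α₂ t
        | exact J24 a₁ a₂ α₁ α₂ t | exact J33 a₁ a₂ α₁ α₂ t | exact J34 a₁ a₂ α₁ α₂ t
        | exact J44 a₁ a₂ α₁ α₂ t
        | exact (Jsymm a₁ a₂ α₁ α₂ t 2 1).trans (J12 a₁ a₂ α₁ α₂ t)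
        | exact (Jsymm a₁ a₂ α₁ α₂ t 3 1).trans (J13 a₁ a₂ α₁ α₂ t)
        | exact (Jsymm a₁ a₂ α₁ α₂ t 4 1).trans (J14 a₁ a₂ α₁ α₂ t)
        | exact (Jsymm a₁ a₂ α₁ α₂ t 3 2).trans (J23 a₁ a₂ α₁ α₂ t)
        | exact (Jsymm a₁ a₂ α₁ α₂ t 4 2).trans (J24 a₁ a₂ α₁ α₂ t)
        | exact (Jsymm a₁ a₂ α₁ α₂ t 4 3).trans (J34 a₁ a₂ α₁ α₂ t)
  rw [gramDet, hM]
  simp [Matrix.det_succ_row_zero, Fin.sum_univ_succ, Matrix.det_fin_three, Fin.succAbove]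
  ring

lemma norm_derivCurveX : ‖deriv x t‖ = Real.sqrt (a₁^2*α₁^2 + a₂^2*α₂^2) := by
  rw [derivCurveX, X1, norm_E4]
  congr 1
  simp only [Matrix.cons_val_zero, Matrix.cons_val_one, Matrix.head_cons, Matrix.cons_val_two,
    Matrix.tail_cons, Matrix.cons_val_three]
  linear_combination a₁^2*α₁^2 * Real.sin_sq_add_cos_sq (α₁*t) + a₂^2*α₂^2 * Real.sin_sq_add_cos_sq (α₂*t)

end Gram

set_option maxHeartbeats 1000000 in
theorem stmt0 (a₁ a₂ α₁ α₂ : ℝ) (ha₁ : 0 < a₁) (ha₂ : 0 < a₂)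
    (hα₁ : 0 < α₁) (hα₂ : 0 < α₂) (hne : α₁ ≠ α₂)
    (m₁ m₂ : ℕ) (hm₁ : 0 < m₁) (hm₂ : 0 < m₂) (hcop : Nat.Coprime m₁ m₂)
    (hratio : α₁ / α₂ = (m₁ : ℝ) / (m₂ : ℝ)) (T : ℝ) (hT : T = 2 * Real.pi * m₁ / α₁) :
    (∫ t in (0:ℝ)..T,
      Real.sqrt (frenetCurvature (curveX a₁ a₂ α₁ α₂) 1 t ^ 2 + frenetCurvature (curveX a₁ a₂ α₁ α₂) 2 t ^ 2
        + frenetCurvature (curveX a₁ a₂ α₁ α₂) 3 t ^ 2) * ‖deriv (curveX a₁ a₂ α₁ α₂) t‖) ≥ 2 * Real.sqrt 5 * Real.pi := by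
  set x := curveX a₁ a₂ α₁ α₂ with hx
  set p2 := a₁^2*α₁^2 + a₂^2*α₂^2 with hp2def
  set p4 := a₁^2*α₁^4 + a₂^2*α₂^4 with hp4def
  set p6 := a₁^2*α₁^6 + a₂^2*α₂^6 with hp6def
  set p8 := a₁^2*α₁^8 + a₂^2*α₂^8 with hp8def
  set A := α₁^2 + α₂^2 with hAdef
  have hp2 : 0 < p2 := by positivity
  have hp4 : 0 < p4 := by positivity
  have hA : 0 < A := by positivity
  have hαsq : α₁^2 - α₂^2 ≠ 0 := by
    intro h
    exact hne (by nlinarith)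
  have hE : 0 < p2 * p6 - p4^2 := by
    have : p2 * p6 - p4^2 = a₁^2*a₂^2*α₁^2*α₂^2*(α₁^2-α₂^2)^2 := by
      rw [hp2def, hp4def, hp6def]; ring
    rw [this]; positivity
  have hF : 0 < p4 * p8 - p6^2 := by
    have : p4 * p8 - p6^2 = a₁^2*a₂^2*α₁^4*α₂^4*(α₁^2-α₂^2)^2 := by
      rw [hp4def, hp6def, hp8def]; ring
    rw [this]; positivity
  have hconst : ∀ t : ℝ,
      Real.sqrt (frenetCurvature x 1 t ^ 2 + frenetCurvature x 2 t ^ 2 + frenetCurvature x 3 t ^ 2)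
        * ‖deriv x t‖ = Real.sqrt A := by
    intro t
    have hn : ‖deriv x t‖ = Real.sqrt p2 := norm_derivCurveX a₁ a₂ α₁ α₂ t
    have hsq : Real.sqrt p2 ^ 2 = p2 := Real.sq_sqrt hp2.le
    have e1 : frenetCurvature x 1 t
        = Real.sqrt (gramDet x 2 t * gramDet x 0 t) / (gramDet x 1 t * ‖deriv x t‖) := rfl
    have e2 : frenetCurvature x 2 t
        = Real.sqrt (gramDet x 3 t * gramDet x 1 t) / (gramDet x 2 t * ‖deriv x t‖) := rfl
    have e3 : frenetCurvature x 3 t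
        = Real.sqrt (gramDet x 4 t * gramDet x 2 t) / (gramDet x 3 t * ‖deriv x t‖) := rfl
    have hs : frenetCurvature x 1 t ^ 2 + frenetCurvature x 2 t ^ 2 + frenetCurvature x 3 t ^ 2
        = A / p2 := by
      rw [e1, e2, e3, gram0, gram1, gram2, gram3, gram4, hn]
      rw [← hp2def, ← hp4def, ← hp6def, ← hp8def]
      have sq_term : ∀ u v : ℝ, 0 ≤ u → (Real.sqrt u / (v * Real.sqrt p2))^2 = u / (v^2 * p2) := by
        intro u v hu
        rw [div_pow, mul_pow, Real.sq_sqrt hu, hsq]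
      rw [sq_term _ _ (by positivity : (0:ℝ) ≤ p2 * p4 * 1),
        sq_term _ _ (mul_nonneg (mul_nonneg hp4.le hE.le) hp2.le),
        sq_term _ _ (mul_nonneg (mul_nonneg hE.le hF.le) (by positivity))]
      have hid : A * p4 = p6 + α₁^2*α₂^2*p2 := by
        rw [hAdef, hp2def, hp4def, hp6def]; ring
      have hFE : p4 * p8 - p6^2 = α₁^2*α₂^2*(p2 * p6 - p4^2) := by
        rw [hp4def, hp6def, hp8def, hp2def]; ring
      rw [hFE]
      have step1 : p2 * p4 * 1 / (p2 ^ 2 * p2)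
          + p4 * (p2 * p6 - p4 ^ 2) * p2 / ((p2 * p4) ^ 2 * p2)
          + (p2 * p6 - p4 ^ 2) * (α₁^2*α₂^2*(p2 * p6 - p4^2)) * (p2 * p4)
              / ((p4 * (p2 * p6 - p4 ^ 2)) ^ 2 * p2)
          = (p6 + α₁^2*α₂^2*p2) / (p2 * p4) := by
        field_simp
        ring
      rw [step1, div_eq_div_iff (mul_ne_zero hp2.ne' hp4.ne') hp2.ne']
      linear_combination p2 * hid
    rw [hs, hn, ← Real.sqrt_mul (by positivity) p2, div_mul_cancel₀ _ hp2.ne']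
  have hint : (∫ t in (0:ℝ)..T,
      Real.sqrt (frenetCurvature x 1 t ^ 2 + frenetCurvature x 2 t ^ 2 + frenetCurvature x 3 t ^ 2)
        * ‖deriv x t‖) = T * Real.sqrt A := by
    rw [intervalIntegral.integral_congr (g := fun _ => Real.sqrt A) (fun t _ => hconst t)]
    rw [intervalIntegral.integral_const, smul_eq_mul, sub_zero]
  rw [ge_iff_le, hint]
  -- arithmetic part
  have key : (m₁ : ℝ) * α₂ = (m₂ : ℝ) * α₁ := by
    have hm₂' : (m₂ : ℝ) ≠ 0 := Nat.cast_ne_zero.2 hm₂.ne'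
    field_simp at hratio
    linarith [hratio]
  have hmne : m₁ ≠ m₂ := by
    rintro rfl
    apply hne
    exact (mul_left_cancel₀ (Nat.cast_ne_zero.2 hm₁.ne' : (m₁:ℝ) ≠ 0) key).symm
  have h5 : (5:ℝ) ≤ (m₁:ℝ)^2 + (m₂:ℝ)^2 := by
    have h : m₁ + 1 ≤ m₂ ∨ m₂ + 1 ≤ m₁ := by omega
    have h1 : (1:ℝ) ≤ m₁ := by exact_mod_cast hm₁
    have h2 : (1:ℝ) ≤ m₂ := by exact_mod_cast hm₂
    rcases h with h | h
    · have : (m₁:ℝ) + 1 ≤ m₂ := by exact_mod_cast h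
      nlinarith
    · have : (m₂:ℝ) + 1 ≤ m₁ := by exact_mod_cast h
      nlinarith
  have hsqA : Real.sqrt 5 * α₁ ≤ (m₁ : ℝ) * Real.sqrt A := by
    have hm₁R : (0:ℝ) ≤ m₁ := Nat.cast_nonneg _
    have h2 : (Real.sqrt 5 * α₁)^2 ≤ ((m₁:ℝ) * Real.sqrt A)^2 := by
      rw [mul_pow, mul_pow, Real.sq_sqrt (by norm_num : (0:ℝ) ≤ 5), Real.sq_sqrt hA.le]
      have : (m₁:ℝ)^2 * A = ((m₁:ℝ)^2 + (m₂:ℝ)^2) * α₁^2 := by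
        rw [hAdef]
        linear_combination ((m₁:ℝ) * α₂ + (m₂:ℝ) * α₁) * key
      rw [this]
      nlinarith [h5, sq_nonneg α₁]
    have := Real.sqrt_le_sqrt h2
    rwa [Real.sqrt_sq (by positivity), Real.sqrt_sq (by positivity)] at this
  rw [hT, div_mul_eq_mul_div, ← sub_nonneg]
  have : 2 * Real.pi * ↑m₁ * Real.sqrt A / α₁ - 2 * Real.sqrt 5 * Real.pi
      = (2 * Real.pi) * (((m₁:ℝ) * Real.sqrt A) - Real.sqrt 5 * α₁) / α₁ := by
    field_simp
  rw [this]
  exact div_nonneg (mul_nonneg (by positivity) (sub_nonneg.2 hsqA)) hα₁.le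
end

section
/- For every t ∈ ℝ, the first Frenet curvature of x satisfies κ₁(t) = √(a₁²α₁⁴ + a₂²α₂⁴) / (a₁²α₁² + a₂²α₂²). -/
open Real intervalIntegral

section aux

lemma eucl_hasDerivAt {n : ℕ} {f : ℝ → Fin n → ℝ} {f' : Fin n → ℝ} {t : ℝ}
    (h : HasDerivAt f f' t) :
    HasDerivAt (fun s => (WithLp.equiv 2 (Fin n → ℝ)).symm (f s))
      ((WithLp.equiv 2 (Fin n → ℝ)).symm f') t :=
  ((EuclideanSpace.equiv (Fin n) ℝ).symm.toContinuousLinearMap.hasFDerivAt).comp_hasDerivAt t h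

lemma hasDerivAt_mul_cos (a c t : ℝ) :
    HasDerivAt (fun t => a * Real.cos (c * t)) (-(a * c * Real.sin (c * t))) t := by
  have := (((hasDerivAt_id t).const_mul c).cos).const_mul a
  refine this.congr_deriv ?_; simp [id]; ring

lemma hasDerivAt_mul_sin (a c t : ℝ) :
    HasDerivAt (fun t => a * Real.sin (c * t)) (a * c * Real.cos (c * t)) t := by
  have := (((hasDerivAt_id t).const_mul c).sin).const_mul a
  refine this.congr_deriv ?_; simp [id]; ring

lemma hasDerivAt_neg_mul_sin (a c t : ℝ) :
    HasDerivAt (fun t => -(a * c * Real.sin (c * t))) (-(a * c ^ 2 * Real.cos (c * t))) t := by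
  have := (hasDerivAt_mul_sin (a * c) c t).neg
  refine this.congr_deriv ?_; ring

lemma hasDerivAt_mul_cos' (a c t : ℝ) :
    HasDerivAt (fun t => a * c * Real.cos (c * t)) (-(a * c ^ 2 * Real.sin (c * t))) t := by
  have := hasDerivAt_mul_cos (a * c) c t
  convert this using 1; ring

end aux

theorem stmt3 (a₁ a₂ α₁ α₂ : ℝ) (ha₁ : 0 < a₁) (ha₂ : 0 < a₂)
    (hα₁ : 0 < α₁) (hα₂ : 0 < α₂) (hne : α₁ ≠ α₂) :
    ∀ t : ℝ, frenetCurvature (curveX a₁ a₂ α₁ α₂) 1 t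
      = Real.sqrt (a₁ ^ 2 * α₁ ^ 4 + a₂ ^ 2 * α₂ ^ 4) / (a₁ ^ 2 * α₁ ^ 2 + a₂ ^ 2 * α₂ ^ 2) := by
  intro t
  set A : ℝ := a₁ ^ 2 * α₁ ^ 2 + a₂ ^ 2 * α₂ ^ 2 with hA
  set B : ℝ := a₁ ^ 2 * α₁ ^ 4 + a₂ ^ 2 * α₂ ^ 4 with hB
  have hApos : 0 < A := by positivity
  -- the first derivative (as a raw `Fin 4 → ℝ` function)
  set v1 : ℝ → Fin 4 → ℝ := fun t =>
    ![-(a₁ * α₁ * Real.sin (α₁ * t)), a₁ * α₁ * Real.cos (α₁ * t),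
      -(a₂ * α₂ * Real.sin (α₂ * t)), a₂ * α₂ * Real.cos (α₂ * t)] with hv1
  set v2 : ℝ → Fin 4 → ℝ := fun t =>
    ![-(a₁ * α₁ ^ 2 * Real.cos (α₁ * t)), -(a₁ * α₁ ^ 2 * Real.sin (α₁ * t)),
      -(a₂ * α₂ ^ 2 * Real.cos (α₂ * t)), -(a₂ * α₂ ^ 2 * Real.sin (α₂ * t))] with hv2
  have hd1 : ∀ s : ℝ, HasDerivAt (curveX a₁ a₂ α₁ α₂)
      ((WithLp.equiv 2 (Fin 4 → ℝ)).symm (v1 s)) s := by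
    intro s
    refine eucl_hasDerivAt (hasDerivAt_pi.2 ?_)
    intro i
    fin_cases i <;>
      simp only [hv1, Matrix.cons_val_zero, Matrix.cons_val_one, Matrix.head_cons,
        Matrix.cons_val_two, Matrix.tail_cons, Matrix.cons_val_three, Fin.isValue]
    · exact hasDerivAt_mul_cos a₁ α₁ s
    · exact hasDerivAt_mul_sin a₁ α₁ s
    · exact hasDerivAt_mul_cos a₂ α₂ s
    · exact hasDerivAt_mul_sin a₂ α₂ s
  have hd2 : ∀ s : ℝ, HasDerivAt (fun u => (WithLp.equiv 2 (Fin 4 → ℝ)).symm (v1 u))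
      ((WithLp.equiv 2 (Fin 4 → ℝ)).symm (v2 s)) s := by
    intro s
    refine eucl_hasDerivAt (hasDerivAt_pi.2 ?_)
    intro i
    fin_cases i <;>
      simp only [hv1, hv2, Matrix.cons_val_zero, Matrix.cons_val_one, Matrix.head_cons,
        Matrix.cons_val_two, Matrix.tail_cons, Matrix.cons_val_three, Fin.isValue]
    · exact hasDerivAt_neg_mul_sin a₁ α₁ s
    · exact hasDerivAt_mul_cos' a₁ α₁ s
    · exact hasDerivAt_neg_mul_sin a₂ α₂ s
    · exact hasDerivAt_mul_cos' a₂ α₂ s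
  have hD1 : deriv (curveX a₁ a₂ α₁ α₂)
      = fun s => (WithLp.equiv 2 (Fin 4 → ℝ)).symm (v1 s) :=
    funext fun s => (hd1 s).deriv
  have hD2 : deriv (deriv (curveX a₁ a₂ α₁ α₂)) t
      = (WithLp.equiv 2 (Fin 4 → ℝ)).symm (v2 t) := by
    rw [hD1]; exact (hd2 t).deriv
  have hit1 : iteratedDeriv 1 (curveX a₁ a₂ α₁ α₂) t
      = (WithLp.equiv 2 (Fin 4 → ℝ)).symm (v1 t) := by
    rw [iteratedDeriv_one, hD1]
  have hit2 : iteratedDeriv 2 (curveX a₁ a₂ α₁ α₂) t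
      = (WithLp.equiv 2 (Fin 4 → ℝ)).symm (v2 t) := by
    rw [show (2 : ℕ) = 1 + 1 from rfl, iteratedDeriv_succ, iteratedDeriv_one, hD2]
  have hs1 := Real.sin_sq_add_cos_sq (α₁ * t)
  have hs2 := Real.sin_sq_add_cos_sq (α₂ * t)
  -- inner products
  have h11 : (inner ℝ ((WithLp.equiv 2 (Fin 4 → ℝ)).symm (v1 t))
      ((WithLp.equiv 2 (Fin 4 → ℝ)).symm (v1 t)) : ℝ) = A := by
    simp only [PiLp.inner_apply, WithLp.equiv_symm_apply, PiLp.toLp_apply, RCLike.inner_apply,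
      starRingEnd_apply, star_trivial, Fin.sum_univ_four, hv1, Matrix.cons_val_zero,
      Matrix.cons_val_one, Matrix.head_cons, Matrix.cons_val_two, Matrix.tail_cons,
      Matrix.cons_val_three]
    linear_combination (a₁^2*α₁^2)*hs1 + (a₂^2*α₂^2)*hs2
  have h12 : (inner ℝ ((WithLp.equiv 2 (Fin 4 → ℝ)).symm (v1 t))
      ((WithLp.equiv 2 (Fin 4 → ℝ)).symm (v2 t)) : ℝ) = 0 := by
    simp only [PiLp.inner_apply, WithLp.equiv_symm_apply, PiLp.toLp_apply, RCLike.inner_apply,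
      starRingEnd_apply, star_trivial, Fin.sum_univ_four, hv1, hv2, Matrix.cons_val_zero,
      Matrix.cons_val_one, Matrix.head_cons, Matrix.cons_val_two, Matrix.tail_cons,
      Matrix.cons_val_three]
    ring
  have h21 : (inner ℝ ((WithLp.equiv 2 (Fin 4 → ℝ)).symm (v2 t))
      ((WithLp.equiv 2 (Fin 4 → ℝ)).symm (v1 t)) : ℝ) = 0 := by
    rw [real_inner_comm]; exact h12
  have h22 : (inner ℝ ((WithLp.equiv 2 (Fin 4 → ℝ)).symm (v2 t))
      ((WithLp.equiv 2 (Fin 4 → ℝ)).symm (v2 t)) : ℝ) = B := by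
    simp only [PiLp.inner_apply, WithLp.equiv_symm_apply, PiLp.toLp_apply, RCLike.inner_apply,
      starRingEnd_apply, star_trivial, Fin.sum_univ_four, hv2, Matrix.cons_val_zero,
      Matrix.cons_val_one, Matrix.head_cons, Matrix.cons_val_two, Matrix.tail_cons,
      Matrix.cons_val_three]
    linear_combination (a₁^2*α₁^4)*hs1 + (a₂^2*α₂^4)*hs2
  -- norm of the first derivative
  have hnorm : ‖deriv (curveX a₁ a₂ α₁ α₂) t‖ = Real.sqrt A := by
    rw [hD1]
    rw [norm_eq_sqrt_real_inner, h11]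
  -- gram determinants
  have hg0 : gramDet (curveX a₁ a₂ α₁ α₂) 0 t = 1 := by
    simp [gramDet, Matrix.det_fin_zero]
  have hg1 : gramDet (curveX a₁ a₂ α₁ α₂) 1 t = A := by
    rw [gramDet, Matrix.det_fin_one]
    simpa [Matrix.of_apply, hit1] using h11
  have hg2 : gramDet (curveX a₁ a₂ α₁ α₂) 2 t = A * B := by
    rw [gramDet, Matrix.det_fin_two]
    simp only [Matrix.of_apply, Fin.val_zero, Fin.val_one, hit1, hit2, h11, h12, h21, h22]
    ring
  -- put everything together
  rw [frenetCurvature, hnorm, hg1]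
  norm_num [hg2, hg0]
  rw [Real.sqrt_mul hApos.le, mul_comm A (Real.sqrt A),
    mul_div_mul_left _ _ (Real.sqrt_ne_zero'.2 hApos)]
end

section
/- For every t ∈ ℝ, the second Frenet curvature of x satisfies κ₂(t) = a₁a₂α₁α₂·|α₁² − α₂²| / ((a₁²α₁² + a₂²α₂²)·√(a₁²α₁⁴ + a₂²α₂⁴)). -/
open Real intervalIntegral

noncomputable def fD (a₁ a₂ α₁ α₂ : ℝ) (k : ℕ) (t : ℝ) : EuclideanSpace ℝ (Fin 4) :=
  (WithLp.equiv 2 (Fin 4 → ℝ)).symm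
    ![a₁ * α₁ ^ k * Real.cos (α₁ * t + k * (π/2)),
      a₁ * α₁ ^ k * Real.sin (α₁ * t + k * (π/2)),
      a₂ * α₂ ^ k * Real.cos (α₂ * t + k * (π/2)),
      a₂ * α₂ ^ k * Real.sin (α₂ * t + k * (π/2))]

lemma hcos (a α : ℝ) (k : ℕ) (t : ℝ) :
    HasDerivAt (fun t => a * α ^ k * Real.cos (α * t + k * (π/2)))
      (a * α ^ (k+1) * Real.cos (α * t + (k+1 : ℕ) * (π/2))) t := by
  have h : HasDerivAt (fun t : ℝ => α * t + k * (π/2)) α t := by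
    simpa using ((hasDerivAt_id t).const_mul α).add_const (k * (π/2))
  have h2 := (h.cos).const_mul (a * α ^ k)
  refine h2.congr_deriv ?_
  have : (α * t + (k+1 : ℕ) * (π/2)) = (α * t + k * (π/2)) + π/2 := by push_cast; ring
  rw [this, Real.cos_add_pi_div_two]
  ring

lemma hsin (a α : ℝ) (k : ℕ) (t : ℝ) :
    HasDerivAt (fun t => a * α ^ k * Real.sin (α * t + k * (π/2)))
      (a * α ^ (k+1) * Real.sin (α * t + (k+1 : ℕ) * (π/2))) t := by
  have h : HasDerivAt (fun t : ℝ => α * t + k * (π/2)) α t := by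
    simpa using ((hasDerivAt_id t).const_mul α).add_const (k * (π/2))
  have h2 := (h.sin).const_mul (a * α ^ k)
  refine h2.congr_deriv ?_
  have : (α * t + (k+1 : ℕ) * (π/2)) = (α * t + k * (π/2)) + π/2 := by push_cast; ring
  rw [this, Real.sin_add_pi_div_two]
  ring

lemma hasDerivAt_fD (a₁ a₂ α₁ α₂ : ℝ) (k : ℕ) (t : ℝ) :
    HasDerivAt (fD a₁ a₂ α₁ α₂ k) (fD a₁ a₂ α₁ α₂ (k+1) t) t := by
  have hg : HasDerivAt (fun t => ![a₁ * α₁ ^ k * Real.cos (α₁ * t + k * (π/2)),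
      a₁ * α₁ ^ k * Real.sin (α₁ * t + k * (π/2)),
      a₂ * α₂ ^ k * Real.cos (α₂ * t + k * (π/2)),
      a₂ * α₂ ^ k * Real.sin (α₂ * t + k * (π/2))] : ℝ → (Fin 4 → ℝ))
      ![a₁ * α₁ ^ (k+1) * Real.cos (α₁ * t + (k+1:ℕ) * (π/2)),
      a₁ * α₁ ^ (k+1) * Real.sin (α₁ * t + (k+1:ℕ) * (π/2)),
      a₂ * α₂ ^ (k+1) * Real.cos (α₂ * t + (k+1:ℕ) * (π/2)),
      a₂ * α₂ ^ (k+1) * Real.sin (α₂ * t + (k+1:ℕ) * (π/2))] t := by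
    rw [hasDerivAt_pi]
    intro i
    fin_cases i <;> simp only [Matrix.cons_val_zero, Matrix.cons_val_one, Matrix.head_cons,
      Matrix.cons_val_two, Matrix.cons_val_three, Matrix.tail_cons]
    · exact hcos a₁ α₁ k t
    · exact hsin a₁ α₁ k t
    · exact hcos a₂ α₂ k t
    · exact hsin a₂ α₂ k t
  have := ((EuclideanSpace.equiv (Fin 4) ℝ).symm : (Fin 4 → ℝ) →L[ℝ] EuclideanSpace ℝ (Fin 4)).hasFDerivAt.comp_hasDerivAt t hg
  exact this

lemma iteratedDeriv_curveX (a₁ a₂ α₁ α₂ : ℝ) (n : ℕ) :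
    iteratedDeriv n (curveX a₁ a₂ α₁ α₂) = fD a₁ a₂ α₁ α₂ n := by
  induction n with
  | zero => funext t; simp [iteratedDeriv_zero, curveX, fD]
  | succ n ih =>
    rw [iteratedDeriv_succ, ih]
    funext t
    exact (hasDerivAt_fD a₁ a₂ α₁ α₂ n t).deriv

lemma inner_fD (a₁ a₂ α₁ α₂ : ℝ) (a b : ℕ) (t : ℝ) :
    (inner ℝ (fD a₁ a₂ α₁ α₂ a t) (fD a₁ a₂ α₁ α₂ b t) : ℝ) =
      (a₁ ^ 2 * α₁ ^ (a + b) + a₂ ^ 2 * α₂ ^ (a + b)) * Real.cos (((a : ℝ) - b) * (π/2)) := by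
  have e1 : ((a : ℝ) - b) * (π/2) = (α₁ * t + a * (π/2)) - (α₁ * t + b * (π/2)) := by ring
  have e2 : ((a : ℝ) - b) * (π/2) = (α₂ * t + a * (π/2)) - (α₂ * t + b * (π/2)) := by ring
  simp only [fD, PiLp.inner_apply, RCLike.inner_apply, conj_trivial, Fin.sum_univ_four,
    WithLp.equiv_symm_apply, PiLp.toLp_apply, Matrix.cons_val_zero, Matrix.cons_val_one, Matrix.head_cons,
    Matrix.cons_val_two, Matrix.cons_val_three, Matrix.tail_cons]
  have h1 := Real.cos_sub (α₁ * t + a * (π/2)) (α₁ * t + b * (π/2))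
  have h2 := Real.cos_sub (α₂ * t + a * (π/2)) (α₂ * t + b * (π/2))
  rw [← e1] at h1; rw [← e2] at h2
  rw [pow_add, pow_add]
  linear_combination (-(a₁^2 * (α₁^a * α₁^b))) * h1 + (-(a₂^2 * (α₂^a * α₂^b))) * h2

theorem stmt4 (a₁ a₂ α₁ α₂ : ℝ) (ha₁ : 0 < a₁) (ha₂ : 0 < a₂)
    (hα₁ : 0 < α₁) (hα₂ : 0 < α₂) (hne : α₁ ≠ α₂) :
    ∀ t : ℝ, frenetCurvature (curveX a₁ a₂ α₁ α₂) 2 t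
      = a₁ * a₂ * α₁ * α₂ * |α₁ ^ 2 - α₂ ^ 2|
        / ((a₁ ^ 2 * α₁ ^ 2 + a₂ ^ 2 * α₂ ^ 2) * Real.sqrt (a₁ ^ 2 * α₁ ^ 4 + a₂ ^ 2 * α₂ ^ 4)) := by

  intro t
  set P : ℝ := a₁ ^ 2 * α₁ ^ 2 + a₂ ^ 2 * α₂ ^ 2 with hP
  set Q : ℝ := a₁ ^ 2 * α₁ ^ 4 + a₂ ^ 2 * α₂ ^ 4 with hQ
  set R : ℝ := a₁ ^ 2 * α₁ ^ 6 + a₂ ^ 2 * α₂ ^ 6 with hR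
  set K : ℝ := a₁ * a₂ * α₁ * α₂ * |α₁ ^ 2 - α₂ ^ 2| with hK
  have hPpos : 0 < P := by positivity
  have hQpos : 0 < Q := by positivity
  have hKnn : 0 ≤ K := by positivity
  -- gram determinants
  have g1 : gramDet (curveX a₁ a₂ α₁ α₂) 1 t = P := by
    simp only [gramDet, iteratedDeriv_curveX, inner_fD, Matrix.det_fin_one, Matrix.of_apply]
    norm_num
    rfl
  have g2 : gramDet (curveX a₁ a₂ α₁ α₂) 2 t = P * Q := by
    simp only [gramDet, iteratedDeriv_curveX, inner_fD, Matrix.det_fin_two, Matrix.of_apply]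
    norm_num [Real.cos_pi_div_two]
    rfl
  have g3 : gramDet (curveX a₁ a₂ α₁ α₂) 3 t = Q * (P * R - Q ^ 2) := by
    simp only [gramDet, iteratedDeriv_curveX, inner_fD, Matrix.det_fin_three, Matrix.of_apply]
    norm_num [Real.cos_pi_div_two]
    ring_nf
    simp only [Real.cos_pi]
    ring
  have hnorm : ‖deriv (curveX a₁ a₂ α₁ α₂) t‖ = Real.sqrt P := by
    have h1 : deriv (curveX a₁ a₂ α₁ α₂) t = fD a₁ a₂ α₁ α₂ 1 t := by
      rw [← iteratedDeriv_one, iteratedDeriv_curveX]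
    rw [h1, norm_eq_sqrt_real_inner, inner_fD]
    norm_num
    rfl
  have hQK : P * R - Q ^ 2 = K ^ 2 := by
    rw [hK, hP, hQ, hR]
    rw [mul_pow, sq_abs]
    ring
  rw [frenetCurvature]
  norm_num [g1, g2, g3, hnorm, hQK]
  -- goal: √(Q * K^2 * P) / (P * Q * √P) = K / (P * √Q)
  have h1 : Real.sqrt (Q * K ^ 2 * P) = Real.sqrt Q * K * Real.sqrt P := by
    rw [Real.sqrt_mul (by positivity), Real.sqrt_mul (by positivity),
      Real.sqrt_sq hKnn]
  rw [h1, div_eq_div_iff (by positivity) (by positivity)]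
  have hq : Real.sqrt Q * Real.sqrt Q = Q := Real.mul_self_sqrt hQpos.le
  linear_combination K * Real.sqrt P * P * hq
end

section
/- For every t ∈ ℝ, the norm of the derivative of the osculating indicatrix satisfies ‖x̃′(t)‖ = a₁a₂α₁α₂·|α₁² − α₂²| / λ. -/
open Real intervalIntegral

lemma my_cons_val_five {α : Type*} {m : ℕ} (x : α) (u : Fin m.succ.succ.succ.succ.succ → α) :
    Matrix.vecCons x u 5 = Matrix.vecHead (Matrix.vecTail (Matrix.vecTail (Matrix.vecTail (Matrix.vecTail u)))) :=
  rfl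

lemma my_hasDerivAt_euclidean {n : ℕ} (f : ℝ → Fin n → ℝ) (f' : Fin n → ℝ) (t : ℝ)
    (h : ∀ i, HasDerivAt (fun s => f s i) (f' i) t) :
    HasDerivAt (fun s => (WithLp.equiv 2 (Fin n → ℝ)).symm (f s))
      ((WithLp.equiv 2 (Fin n → ℝ)).symm f') t := by
  have h1 : HasDerivAt f f' t := hasDerivAt_pi.2 h
  exact (PiLp.continuousLinearEquiv 2 ℝ (fun _ : Fin n => ℝ)).symm.hasFDerivAt.comp_hasDerivAt t h1

section
variable (a₁ a₂ α₁ α₂ : ℝ)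

noncomputable def myV (t : ℝ) : EuclideanSpace ℝ (Fin 4) :=
  (WithLp.equiv 2 (Fin 4 → ℝ)).symm
    ![-(a₁ * α₁) * Real.sin (α₁ * t), a₁ * α₁ * Real.cos (α₁ * t),
      -(a₂ * α₂) * Real.sin (α₂ * t), a₂ * α₂ * Real.cos (α₂ * t)]

noncomputable def myA (t : ℝ) : EuclideanSpace ℝ (Fin 4) :=
  (WithLp.equiv 2 (Fin 4 → ℝ)).symm
    ![-(a₁ * α₁ ^ 2) * Real.cos (α₁ * t), -(a₁ * α₁ ^ 2) * Real.sin (α₁ * t),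
      -(a₂ * α₂ ^ 2) * Real.cos (α₂ * t), -(a₂ * α₂ ^ 2) * Real.sin (α₂ * t)]

noncomputable def myW (t : ℝ) : EuclideanSpace ℝ (Fin 6) :=
  (WithLp.equiv 2 (Fin 6 → ℝ)).symm
    ![a₁ ^ 2 * α₁ ^ 3,
      a₁ * a₂ * α₁ * α₂ * (α₂ * (Real.sin (α₁ * t) * Real.cos (α₂ * t)) - α₁ * (Real.cos (α₁ * t) * Real.sin (α₂ * t))),
      a₁ * a₂ * α₁ * α₂ * (α₂ * (Real.sin (α₁ * t) * Real.sin (α₂ * t)) + α₁ * (Real.cos (α₁ * t) * Real.cos (α₂ * t))),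
      -(a₁ * a₂ * α₁ * α₂) * (α₂ * (Real.cos (α₁ * t) * Real.cos (α₂ * t)) + α₁ * (Real.sin (α₁ * t) * Real.sin (α₂ * t))),
      a₁ * a₂ * α₁ * α₂ * (α₁ * (Real.sin (α₁ * t) * Real.cos (α₂ * t)) - α₂ * (Real.cos (α₁ * t) * Real.sin (α₂ * t))),
      a₂ ^ 2 * α₂ ^ 3]

noncomputable def myW' (t : ℝ) : EuclideanSpace ℝ (Fin 6) :=
  (WithLp.equiv 2 (Fin 6 → ℝ)).symm
    ![0,
      a₁ * a₂ * α₁ * α₂ * ((α₁ ^ 2 - α₂ ^ 2) * (Real.sin (α₁ * t) * Real.sin (α₂ * t))),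
      a₁ * a₂ * α₁ * α₂ * ((α₂ ^ 2 - α₁ ^ 2) * (Real.sin (α₁ * t) * Real.cos (α₂ * t))),
      -(a₁ * a₂ * α₁ * α₂) * ((α₁ ^ 2 - α₂ ^ 2) * (Real.cos (α₁ * t) * Real.sin (α₂ * t))),
      a₁ * a₂ * α₁ * α₂ * ((α₁ ^ 2 - α₂ ^ 2) * (Real.cos (α₁ * t) * Real.cos (α₂ * t))),
      0]
end

section
variable {a₁ a₂ α₁ α₂ : ℝ}

lemma my_hd_sin (c t : ℝ) : HasDerivAt (fun s => Real.sin (c * s)) (c * Real.cos (c * t)) t := by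
  have := ((hasDerivAt_id t).const_mul c).sin
  exact this.congr_deriv (by simp only [id_eq, mul_one]; ring)

lemma my_hd_cos (c t : ℝ) : HasDerivAt (fun s => Real.cos (c * s)) (-(c * Real.sin (c * t))) t := by
  have := ((hasDerivAt_id t).const_mul c).cos
  exact this.congr_deriv (by simp only [id_eq, mul_one]; ring)

lemma hX (t : ℝ) : HasDerivAt (curveX a₁ a₂ α₁ α₂) (myV a₁ a₂ α₁ α₂ t) t := by
  apply my_hasDerivAt_euclidean
  intro i
  fin_cases i
  · show HasDerivAt (fun s => a₁ * Real.cos (α₁ * s)) (-(a₁ * α₁) * Real.sin (α₁ * t)) t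
    have := (my_hd_cos α₁ t).const_mul a₁; exact this.congr_deriv (by ring)
  · show HasDerivAt (fun s => a₁ * Real.sin (α₁ * s)) (a₁ * α₁ * Real.cos (α₁ * t)) t
    have := (my_hd_sin α₁ t).const_mul a₁; exact this.congr_deriv (by ring)
  · show HasDerivAt (fun s => a₂ * Real.cos (α₂ * s)) (-(a₂ * α₂) * Real.sin (α₂ * t)) t
    have := (my_hd_cos α₂ t).const_mul a₂; exact this.congr_deriv (by ring)
  · show HasDerivAt (fun s => a₂ * Real.sin (α₂ * s)) (a₂ * α₂ * Real.cos (α₂ * t)) t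
    have := (my_hd_sin α₂ t).const_mul a₂; exact this.congr_deriv (by ring)

lemma hV (t : ℝ) : HasDerivAt (myV a₁ a₂ α₁ α₂) (myA a₁ a₂ α₁ α₂ t) t := by
  apply my_hasDerivAt_euclidean
  intro i
  fin_cases i
  · show HasDerivAt (fun s => -(a₁ * α₁) * Real.sin (α₁ * s)) (-(a₁ * α₁ ^ 2) * Real.cos (α₁ * t)) t
    have := (my_hd_sin α₁ t).const_mul (-(a₁ * α₁)); exact this.congr_deriv (by ring)
  · show HasDerivAt (fun s => a₁ * α₁ * Real.cos (α₁ * s)) (-(a₁ * α₁ ^ 2) * Real.sin (α₁ * t)) t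
    have := (my_hd_cos α₁ t).const_mul (a₁ * α₁); exact this.congr_deriv (by ring)
  · show HasDerivAt (fun s => -(a₂ * α₂) * Real.sin (α₂ * s)) (-(a₂ * α₂ ^ 2) * Real.cos (α₂ * t)) t
    have := (my_hd_sin α₂ t).const_mul (-(a₂ * α₂)); exact this.congr_deriv (by ring)
  · show HasDerivAt (fun s => a₂ * α₂ * Real.cos (α₂ * s)) (-(a₂ * α₂ ^ 2) * Real.sin (α₂ * t)) t
    have := (my_hd_cos α₂ t).const_mul (a₂ * α₂); exact this.congr_deriv (by ring)

lemma hW (t : ℝ) : HasDerivAt (myW a₁ a₂ α₁ α₂) (myW' a₁ a₂ α₁ α₂ t) t := by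
  apply my_hasDerivAt_euclidean
  intro i
  fin_cases i
  · show HasDerivAt (fun _ : ℝ => a₁ ^ 2 * α₁ ^ 3) (0 : ℝ) t
    exact hasDerivAt_const t _
  · show HasDerivAt (fun s => a₁ * a₂ * α₁ * α₂ * (α₂ * (Real.sin (α₁ * s) * Real.cos (α₂ * s)) - α₁ * (Real.cos (α₁ * s) * Real.sin (α₂ * s))))
      (a₁ * a₂ * α₁ * α₂ * ((α₁ ^ 2 - α₂ ^ 2) * (Real.sin (α₁ * t) * Real.sin (α₂ * t)))) t
    have := ((((my_hd_sin α₁ t).mul (my_hd_cos α₂ t)).const_mul α₂).sub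
      (((my_hd_cos α₁ t).mul (my_hd_sin α₂ t)).const_mul α₁)).const_mul (a₁ * a₂ * α₁ * α₂)
    exact this.congr_deriv (by ring)
  · show HasDerivAt (fun s => a₁ * a₂ * α₁ * α₂ * (α₂ * (Real.sin (α₁ * s) * Real.sin (α₂ * s)) + α₁ * (Real.cos (α₁ * s) * Real.cos (α₂ * s))))
      (a₁ * a₂ * α₁ * α₂ * ((α₂ ^ 2 - α₁ ^ 2) * (Real.sin (α₁ * t) * Real.cos (α₂ * t)))) t
    have := ((((my_hd_sin α₁ t).mul (my_hd_sin α₂ t)).const_mul α₂).add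
      (((my_hd_cos α₁ t).mul (my_hd_cos α₂ t)).const_mul α₁)).const_mul (a₁ * a₂ * α₁ * α₂)
    exact this.congr_deriv (by ring)
  · show HasDerivAt (fun s => -(a₁ * a₂ * α₁ * α₂) * (α₂ * (Real.cos (α₁ * s) * Real.cos (α₂ * s)) + α₁ * (Real.sin (α₁ * s) * Real.sin (α₂ * s))))
      (-(a₁ * a₂ * α₁ * α₂) * ((α₁ ^ 2 - α₂ ^ 2) * (Real.cos (α₁ * t) * Real.sin (α₂ * t)))) t
    have := ((((my_hd_cos α₁ t).mul (my_hd_cos α₂ t)).const_mul α₂).add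
      (((my_hd_sin α₁ t).mul (my_hd_sin α₂ t)).const_mul α₁)).const_mul (-(a₁ * a₂ * α₁ * α₂))
    exact this.congr_deriv (by ring)
  · show HasDerivAt (fun s => a₁ * a₂ * α₁ * α₂ * (α₁ * (Real.sin (α₁ * s) * Real.cos (α₂ * s)) - α₂ * (Real.cos (α₁ * s) * Real.sin (α₂ * s))))
      (a₁ * a₂ * α₁ * α₂ * ((α₁ ^ 2 - α₂ ^ 2) * (Real.cos (α₁ * t) * Real.cos (α₂ * t)))) t
    have := ((((my_hd_sin α₁ t).mul (my_hd_cos α₂ t)).const_mul α₁).sub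
      (((my_hd_cos α₁ t).mul (my_hd_sin α₂ t)).const_mul α₂)).const_mul (a₁ * a₂ * α₁ * α₂)
    exact this.congr_deriv (by ring)
  · show HasDerivAt (fun _ : ℝ => a₂ ^ 2 * α₂ ^ 3) (0 : ℝ) t
    exact hasDerivAt_const t _

lemma oscW_eq (t : ℝ) : oscW (curveX a₁ a₂ α₁ α₂) t = myW a₁ a₂ α₁ α₂ t := by
  have h1 : deriv (curveX a₁ a₂ α₁ α₂) = myV a₁ a₂ α₁ α₂ := funext fun t => (hX t).deriv
  have h2 : deriv (myV a₁ a₂ α₁ α₂) = myA a₁ a₂ α₁ α₂ := funext fun t => (hV t).deriv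
  have p₁ := Real.sin_sq_add_cos_sq (α₁ * t)
  have p₂ := Real.sin_sq_add_cos_sq (α₂ * t)
  unfold oscW myW
  rw [h1, h2]
  apply congrArg
  funext i
  fin_cases i
  · show (-(a₁*α₁) * Real.sin (α₁*t)) * (-(a₁*α₁^2) * Real.sin (α₁*t))
        - (a₁*α₁ * Real.cos (α₁*t)) * (-(a₁*α₁^2) * Real.cos (α₁*t)) = a₁ ^ 2 * α₁ ^ 3
    linear_combination (a₁ ^ 2 * α₁ ^ 3) * p₁
  · show (-(a₁*α₁) * Real.sin (α₁*t)) * (-(a₂*α₂^2) * Real.cos (α₂*t))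
        - (-(a₂*α₂) * Real.sin (α₂*t)) * (-(a₁*α₁^2) * Real.cos (α₁*t))
        = a₁ * a₂ * α₁ * α₂ * (α₂ * (Real.sin (α₁ * t) * Real.cos (α₂ * t)) - α₁ * (Real.cos (α₁ * t) * Real.sin (α₂ * t)))
    ring
  · show (-(a₁*α₁) * Real.sin (α₁*t)) * (-(a₂*α₂^2) * Real.sin (α₂*t))
        - (a₂*α₂ * Real.cos (α₂*t)) * (-(a₁*α₁^2) * Real.cos (α₁*t))
        = a₁ * a₂ * α₁ * α₂ * (α₂ * (Real.sin (α₁ * t) * Real.sin (α₂ * t)) + α₁ * (Real.cos (α₁ * t) * Real.cos (α₂ * t)))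
    ring
  · show (a₁*α₁ * Real.cos (α₁*t)) * (-(a₂*α₂^2) * Real.cos (α₂*t))
        - (-(a₂*α₂) * Real.sin (α₂*t)) * (-(a₁*α₁^2) * Real.sin (α₁*t))
        = -(a₁ * a₂ * α₁ * α₂) * (α₂ * (Real.cos (α₁ * t) * Real.cos (α₂ * t)) + α₁ * (Real.sin (α₁ * t) * Real.sin (α₂ * t)))
    ring
  · show (a₁*α₁ * Real.cos (α₁*t)) * (-(a₂*α₂^2) * Real.sin (α₂*t))
        - (a₂*α₂ * Real.cos (α₂*t)) * (-(a₁*α₁^2) * Real.sin (α₁*t))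
        = a₁ * a₂ * α₁ * α₂ * (α₁ * (Real.sin (α₁ * t) * Real.cos (α₂ * t)) - α₂ * (Real.cos (α₁ * t) * Real.sin (α₂ * t)))
    ring
  · show (-(a₂*α₂) * Real.sin (α₂*t)) * (-(a₂*α₂^2) * Real.sin (α₂*t))
        - (a₂*α₂ * Real.cos (α₂*t)) * (-(a₂*α₂^2) * Real.cos (α₂*t)) = a₂ ^ 2 * α₂ ^ 3
    linear_combination (a₂ ^ 2 * α₂ ^ 3) * p₂
end

section
variable {a₁ a₂ α₁ α₂ : ℝ}

lemma norm_myW (t : ℝ) : ‖myW a₁ a₂ α₁ α₂ t‖ =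
    Real.sqrt (a₁ ^ 2 * α₁ ^ 2 + a₂ ^ 2 * α₂ ^ 2) * Real.sqrt (a₁ ^ 2 * α₁ ^ 4 + a₂ ^ 2 * α₂ ^ 4) := by
  have p₁ := Real.sin_sq_add_cos_sq (α₁ * t)
  have p₂ := Real.sin_sq_add_cos_sq (α₂ * t)
  rw [EuclideanSpace.norm_eq]
  have hs : ∑ i, ‖myW a₁ a₂ α₁ α₂ t i‖ ^ 2
      = (a₁ ^ 2 * α₁ ^ 2 + a₂ ^ 2 * α₂ ^ 2) * (a₁ ^ 2 * α₁ ^ 4 + a₂ ^ 2 * α₂ ^ 4) := by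
    simp only [myW, WithLp.equiv_symm_apply, PiLp.toLp_apply, Fin.sum_univ_six, Matrix.cons_val_zero,
      Matrix.cons_val_one, Matrix.head_cons, Matrix.cons_val_two, Matrix.tail_cons,
      Matrix.cons_val_three, Matrix.cons_val_four, my_cons_val_five, Matrix.cons_val_fin_one,
      Real.norm_eq_abs, sq_abs]
    linear_combination ((a₁*a₂*α₁*α₂)^2 * (α₁^2+α₂^2) * (Real.sin (α₂*t)^2 + Real.cos (α₂*t)^2)) * p₁
      + ((a₁*a₂*α₁*α₂)^2 * (α₁^2+α₂^2)) * p₂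
  rw [hs, Real.sqrt_mul (by positivity)]

lemma norm_myW' (t : ℝ) : ‖myW' a₁ a₂ α₁ α₂ t‖ = |a₁ * a₂ * α₁ * α₂ * (α₁ ^ 2 - α₂ ^ 2)| := by
  have p₁ := Real.sin_sq_add_cos_sq (α₁ * t)
  have p₂ := Real.sin_sq_add_cos_sq (α₂ * t)
  rw [EuclideanSpace.norm_eq]
  have hs : ∑ i, ‖myW' a₁ a₂ α₁ α₂ t i‖ ^ 2
      = (a₁ * a₂ * α₁ * α₂ * (α₁ ^ 2 - α₂ ^ 2)) ^ 2 := by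
    simp only [myW', WithLp.equiv_symm_apply, PiLp.toLp_apply, Fin.sum_univ_six, Matrix.cons_val_zero,
      Matrix.cons_val_one, Matrix.head_cons, Matrix.cons_val_two, Matrix.tail_cons,
      Matrix.cons_val_three, Matrix.cons_val_four, my_cons_val_five, Matrix.cons_val_fin_one,
      Real.norm_eq_abs, sq_abs]
    linear_combination ((a₁*a₂*α₁*α₂)^2 * (α₁^2-α₂^2)^2 * (Real.sin (α₂*t)^2 + Real.cos (α₂*t)^2)) * p₁
      + ((a₁*a₂*α₁*α₂)^2 * (α₁^2-α₂^2)^2) * p₂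
  rw [hs, Real.sqrt_sq_eq_abs]
end

theorem stmt13 (a₁ a₂ α₁ α₂ : ℝ) (ha₁ : 0 < a₁) (ha₂ : 0 < a₂)
    (hα₁ : 0 < α₁) (hα₂ : 0 < α₂) (hne : α₁ ≠ α₂) (lam : ℝ)
    (hlam : lam = Real.sqrt (a₁ ^ 2 * α₁ ^ 2 + a₂ ^ 2 * α₂ ^ 2) * Real.sqrt (a₁ ^ 2 * α₁ ^ 4 + a₂ ^ 2 * α₂ ^ 4)) :
    ∀ t : ℝ, ‖deriv (oscInd (curveX a₁ a₂ α₁ α₂)) t‖ = a₁ * a₂ * α₁ * α₂ * |α₁ ^ 2 - α₂ ^ 2| / lam := by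
  intro t
  have hlam_pos : 0 < lam := by
    rw [hlam]
    have h1 : (0:ℝ) < a₁ ^ 2 * α₁ ^ 2 + a₂ ^ 2 * α₂ ^ 2 := by positivity
    have h2 : (0:ℝ) < a₁ ^ 2 * α₁ ^ 4 + a₂ ^ 2 * α₂ ^ 4 := by positivity
    exact mul_pos (Real.sqrt_pos.2 h1) (Real.sqrt_pos.2 h2)
  have hosc : oscInd (curveX a₁ a₂ α₁ α₂) = fun s => lam⁻¹ • myW a₁ a₂ α₁ α₂ s := by
    funext s
    unfold oscInd
    rw [oscW_eq s, norm_myW s, ← hlam]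
  have hd : HasDerivAt (oscInd (curveX a₁ a₂ α₁ α₂)) (lam⁻¹ • myW' a₁ a₂ α₁ α₂ t) t := by
    rw [hosc]
    exact (hW t).const_smul lam⁻¹
  rw [hd.deriv, norm_smul, norm_myW' t, Real.norm_eq_abs,
    abs_of_pos (inv_pos.2 hlam_pos), abs_mul,
    abs_of_pos (by positivity : (0:ℝ) < a₁ * a₂ * α₁ * α₂)]
  field_simp
end
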